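/- Let t be a binary tree. Then the map τ ↦ W(t,τ), from states of t to tuples of words of M indexed by the leaves of t, is injective. -/
import Mathlib


/-- Finite ordered rooted binary trees. -/
inductive BTree where
  | leaf : BTree
  | node : BTree → BTree → BTree
deriving DecidableEq

/-- Positions (vertices) in a binary tree: `false` = go to the left child,
`true` = go to the right child. -/
abbrev Pos := List Bool

/-- The subtree of `t` at position `p`, if `p` stays inside `t`. -/
def BTree.subtreeAt : BTree → Pos → Option BTree
  | t, [] => some t
  | .leaf, _ :: _ => none
  | .node l r, b :: p => (if b then r else l).subtreeAt p

/-- `p` is an internal (trivalent) vertex of `t`. -/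
def IsInternal (t : BTree) (p : Pos) : Prop :=
  ∃ l r, t.subtreeAt p = some (BTree.node l r)

/-- `p` is a leaf of `t`. -/
def IsLeafPos (t : BTree) (p : Pos) : Prop :=
  t.subtreeAt p = some BTree.leaf

/-- The word `W(t,τ)_ℓ` in the free monoid `M` on the letters `a_j = (j, false)`,
`b_j = (j, true)` (`j ∈ ℕ`), read along the root-to-`ℓ` path `p`: the `i`-th edge
contributes the letter `a_{g} `resp. `b_g` (according to whether it is a left or a right
edge) where `g = (∑_{r ≤ i} τ(p.take r)) − 1`, with the convention that index `−1`
(i.e. when the sum vanishes) gives the empty word.  The state `τ` is given as a total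
function on positions; only its values at the internal vertices of the tree on the path
to `ℓ` are used. -/
def Wword (τ : Pos → Fin 2) (p : Pos) : List (ℕ × Bool) :=
  (List.range p.length).filterMap fun i =>
    let s : ℕ := ((List.range (i + 1)).map fun r => ((τ (p.take r) : ℕ))).sum
    if s = 0 then none else some (s - 1, p.getD i false)

/-- total "potential" along the path `q`. -/
def Fsum (τ : Pos → Fin 2) (q : Pos) : ℕ :=
  ((List.range q.length).map fun r => ((τ (q.take r) : ℕ))).sum

lemma Wword_def (τ : Pos → Fin 2) (p : Pos) :
    Wword τ p = (List.range p.length).filterMap fun i =>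
      if ((List.range (i + 1)).map fun r => ((τ (p.take r) : ℕ))).sum = 0 then none
      else some (((List.range (i + 1)).map fun r => ((τ (p.take r) : ℕ))).sum - 1,
        p.getD i false) := rfl

lemma Fsum_snoc (τ : Pos → Fin 2) (q : Pos) (b : Bool) :
    Fsum τ (q ++ [b]) = Fsum τ q + τ q := by
  unfold Fsum
  simp only [List.length_append, List.length_singleton, List.range_succ, List.map_append,
    List.sum_append, List.map_cons, List.map_nil, List.sum_cons, List.sum_nil]
  congr 1
  · congr 1
    refine List.map_congr_left fun r hr => ?_
    rw [List.take_append_of_le_length (le_of_lt (List.mem_range.1 hr))]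
  · rw [List.take_left]; ring

lemma sum_range_mono (f : ℕ → ℕ) {m n : ℕ} (h : m ≤ n) :
    ((List.range m).map f).sum ≤ ((List.range n).map f).sum := by
  induction h with
  | refl => exact le_refl _
  | step h ih =>
    refine ih.trans ?_
    rw [List.range_succ]
    simp

lemma partial_le (τ : Pos → Fin 2) (q : Pos) (i : ℕ) (hi : i < q.length) :
    ((List.range (i + 1)).map fun r => ((τ (q.take r) : ℕ))).sum ≤ Fsum τ q :=
  sum_range_mono _ hi

lemma Wword_eq_nil_iff (τ : Pos → Fin 2) (q : Pos) :
    Wword τ q = [] ↔ Fsum τ q = 0 := by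
  constructor
  · intro hw
    rcases Nat.eq_zero_or_pos q.length with h0 | hpos
    · unfold Fsum; rw [h0]; simp
    · rw [Wword_def, List.filterMap_eq_nil_iff] at hw
      have := hw (q.length - 1) (List.mem_range.2 (by omega))
      by_contra hF
      rw [if_neg ?_] at this
      · exact Option.some_ne_none _ this
      · intro hz
        apply hF
        have : q.length - 1 + 1 = q.length := by omega
        rwa [this] at hz
  · intro hF
    rw [Wword_def, List.filterMap_eq_nil_iff]
    intro i hi
    rw [if_pos]
    exact Nat.le_zero.1 (hF ▸ partial_le τ q i (List.mem_range.1 hi))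

lemma Wword_snoc (τ : Pos → Fin 2) (q : Pos) (b : Bool) :
    Wword τ (q ++ [b]) =
      Wword τ q ++ (if Fsum τ (q ++ [b]) = 0 then [] else [(Fsum τ (q ++ [b]) - 1, b)]) := by
  rw [Wword_def, Wword_def]
  have hr : List.range ((q ++ [b]).length) = List.range q.length ++ [q.length] := by
    simp [List.range_succ]
  rw [hr, List.filterMap_append]
  congr 1
  · refine List.filterMap_congr fun i hi => ?_
    have hi' : i < q.length := List.mem_range.1 hi
    have hsum : ((List.range (i + 1)).map fun r => ((τ ((q ++ [b]).take r) : ℕ))).sum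
        = ((List.range (i + 1)).map fun r => ((τ (q.take r) : ℕ))).sum := by
      congr 1
      refine List.map_congr_left fun r hr => ?_
      rw [List.take_append_of_le_length (le_of_lt (lt_of_lt_of_le (List.mem_range.1 hr) hi'))]
    have hget : (q ++ [b]).getD i false = q.getD i false :=
      List.getD_append _ _ _ _ hi'
    rw [hsum, hget]
  · have hsum : ((List.range (q.length + 1)).map fun r => ((τ ((q ++ [b]).take r) : ℕ))).sum
        = Fsum τ (q ++ [b]) := by
      unfold Fsum; simp
    have hget : (q ++ [b]).getD q.length false = b := by
      simp [List.getD_eq_getElem?_getD]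
    rw [List.filterMap_cons, hsum, hget]
    simp only [List.filterMap_nil]
    by_cases hF : Fsum τ (q ++ [b]) = 0
    · rw [if_pos hF, if_pos hF]
    · rw [if_neg hF, if_neg hF]

lemma key (τ₁ τ₂ : Pos → Fin 2) :
    ∀ q : Pos, Wword τ₁ q = Wword τ₂ q →
      ∀ j ≤ q.length, Fsum τ₁ (q.take j) = Fsum τ₂ (q.take j) := by
  intro q
  induction q using List.reverseRecOn with
  | nil =>
    intro _ j hj
    have : j = 0 := Nat.le_zero.1 hj
    subst this
    rfl
  | append_singleton q' b ih =>
    intro hw j hj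
    rw [Wword_snoc, Wword_snoc] at hw
    have hF1 : Fsum τ₁ (q' ++ [b]) = Fsum τ₁ q' + τ₁ q' := Fsum_snoc ..
    have hF2 : Fsum τ₂ (q' ++ [b]) = Fsum τ₂ q' + τ₂ q' := Fsum_snoc ..
    have main : Wword τ₁ q' = Wword τ₂ q' ∧ Fsum τ₁ (q' ++ [b]) = Fsum τ₂ (q' ++ [b]) := by
      by_cases h1 : Fsum τ₁ (q' ++ [b]) = 0 <;> by_cases h2 : Fsum τ₂ (q' ++ [b]) = 0
      · rw [if_pos h1, if_pos h2, List.append_nil, List.append_nil] at hw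
        exact ⟨hw, h1.trans h2.symm⟩
      · exfalso
        have : Fsum τ₁ q' = 0 := by omega
        have hnil : Wword τ₁ q' = [] := (Wword_eq_nil_iff _ _).2 this
        rw [if_pos h1, if_neg h2, List.append_nil, hnil] at hw
        simp at hw
      · exfalso
        have : Fsum τ₂ q' = 0 := by omega
        have hnil : Wword τ₂ q' = [] := (Wword_eq_nil_iff _ _).2 this
        rw [if_neg h1, if_pos h2, List.append_nil, hnil] at hw
        simp at hw
      · rw [if_neg h1, if_neg h2] at hw
        have := List.append_inj' hw (by simp)
        refine ⟨this.1, ?_⟩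
        have := this.2
        simp only [List.cons.injEq, Prod.mk.injEq] at this
        omega
    rcases Nat.lt_or_ge j (q'.length + 1) with hlt | hge
    · have hjle : j ≤ q'.length := by omega
      have htake : (q' ++ [b]).take j = q'.take j := List.take_append_of_le_length hjle
      rw [htake]
      exact ih main.1 j hjle
    · have hj' : j = q'.length + 1 := by
        simp only [List.length_append, List.length_singleton] at hj; omega
      have htake : (q' ++ [b]).take j = q' ++ [b] := by
        rw [hj']
        have : q'.length + 1 = (q' ++ [b]).length := by simp
        rw [this, List.take_length]
      rw [htake]
      exact main.2

lemma exists_leaf (s : BTree) : ∃ e : Pos, s.subtreeAt e = some BTree.leaf := by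
  induction s with
  | leaf => exact ⟨[], rfl⟩
  | node l r ihl ihr =>
    obtain ⟨e, he⟩ := ihl
    exact ⟨false :: e, by simpa [BTree.subtreeAt] using he⟩

lemma subtreeAt_append (t : BTree) (p e : Pos) :
    t.subtreeAt (p ++ e) = (t.subtreeAt p).bind (fun s => s.subtreeAt e) := by
  induction p generalizing t with
  | nil => simp [BTree.subtreeAt]
  | cons b p' ih =>
    cases t with
    | leaf => simp [BTree.subtreeAt]
    | node l r => simp [BTree.subtreeAt, ih]

/-- For every binary tree `t`, the map `τ ↦ W(t,τ)` from states of `t`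
(functions from the internal vertices of `t` to `{0,1}`) to tuples of words of `M`
indexed by the leaves of `t` is injective: if two states yield the same word at every
leaf, then they agree at every internal vertex. -/
theorem stmt10 (t : BTree) (τ₁ τ₂ : Pos → Fin 2)
    (h : ∀ p : Pos, IsLeafPos t p → Wword τ₁ p = Wword τ₂ p) :
    ∀ p : Pos, IsInternal t p → τ₁ p = τ₂ p := by
  intro p hp
  obtain ⟨l, r, hsub⟩ := hp
  obtain ⟨e, he⟩ := exists_leaf l
  set q : Pos := p ++ (false :: e) with hq
  have hleaf : IsLeafPos t q := by
    unfold IsLeafPos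
    rw [hq, subtreeAt_append, hsub]
    simpa [BTree.subtreeAt] using he
  have hw := h q hleaf
  have hk := key τ₁ τ₂ q hw
  have hlen : p.length + 1 ≤ q.length := by simp [hq]
  have h1 : Fsum τ₁ (q.take p.length) = Fsum τ₂ (q.take p.length) := hk _ (by omega)
  have h2 : Fsum τ₁ (q.take (p.length + 1)) = Fsum τ₂ (q.take (p.length + 1)) :=
    hk _ hlen
  have htake1 : q.take p.length = p := by rw [hq, List.take_left]
  have htake2 : q.take (p.length + 1) = p ++ [false] := by
    have : q = (p ++ [false]) ++ e := by simp [hq]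
    rw [this]
    have hl : p.length + 1 = (p ++ [false]).length := by simp
    rw [hl, List.take_left]
  rw [htake1] at h1
  rw [htake2, Fsum_snoc, Fsum_snoc] at h2
  have : (τ₁ p : ℕ) = (τ₂ p : ℕ) := by omega
  exact Fin.ext this
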